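/- For every k = 0,1,2,…, let T_k : H → H be nonexpansive on a real Hilbert space H and let C ⊆ ⋂_k Fix T_k be nonempty, closed and convex. Let {β_k} ⊆ (0,∞) be summable, let {v^k} ⊆ H be bounded, and define x^{k+1} := T_k(x^k − β_k v^k) for a given x^0 ∈ H. Assume that for every i = 0,1,2,… there is x_i^∞ ∈ C such that T_k ⋯ T_i x^i converges weakly (as k → ∞) to x_i^∞. Then there is x^∞ ∈ C such that x_i^∞ → x^∞ in norm and x^k converges weakly to x^∞; moreover, for all y ∈ H and all integers k ≥ i ≥ 0, |⟨y, x^{k+1} − x^∞⟩| ≤ |⟨y, T_k ⋯ T_i x^i − x_i^∞⟩| + 2‖y‖ Σ_{j=i}^{∞} β_j ‖v^j‖. -/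

import Mathlib

open Metric Filter Topology
open scoped RealInnerProductSpace

/-- `prodSeq T i x n = T_{i+n-1} ⋯ T_i x`; thus for `k ≥ i`, `prodSeq T i x (k - i)` is the
product `T_{k-1} ⋯ T_i` applied to `x`, and `prodSeq T i (x i) (k + 1 - i) = T_k ⋯ T_i x^i`. -/
def prodSeq {H : Type*} (T : ℕ → H → H) (i : ℕ) (x : H) : ℕ → H
  | 0 => x
  | n + 1 => T (i + n) (prodSeq T i x n)

lemma prodSeq_add {H : Type*} (T : ℕ → H → H) (i : ℕ) (w : H) (m : ℕ) :
    ∀ n, prodSeq T i w (m + n) = prodSeq T (i + m) (prodSeq T i w m) n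
  | 0 => rfl
  | n + 1 => by
    show T (i + (m + n)) (prodSeq T i w (m + n)) = T ((i + m) + n) _
    rw [prodSeq_add T i w m n, add_assoc]

lemma prodSeq_nonexp {H : Type*} [NormedAddCommGroup H]
    (T : ℕ → H → H) (hT : ∀ k, ∀ y z : H, ‖T k y - T k z‖ ≤ ‖y - z‖)
    (i : ℕ) (w z : H) : ∀ n, ‖prodSeq T i w n - prodSeq T i z n‖ ≤ ‖w - z‖
  | 0 => le_rfl
  | n + 1 => le_trans (hT _ _ _) (prodSeq_nonexp T hT i w z n)

theorem stmt14 {H : Type*} [NormedAddCommGroup H] [InnerProductSpace ℝ H] [CompleteSpace H]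
    (T : ℕ → H → H) (hT : ∀ k, ∀ y z : H, ‖T k y - T k z‖ ≤ ‖y - z‖)
    (C : Set H) (hCne : C.Nonempty) (hCcl : IsClosed C) (hCcv : Convex ℝ C)
    (hfix : ∀ k, ∀ z ∈ C, T k z = z)
    (β : ℕ → ℝ) (hβ : ∀ k, 0 < β k) (hβsum : Summable β)
    (v : ℕ → H) (hv : ∃ B : ℝ, ∀ k, ‖v k‖ ≤ B)
    (x : ℕ → H) (hx : ∀ k, x (k + 1) = T k (x k - β k • v k))
    (xinf : ℕ → H) (hxinfC : ∀ i, xinf i ∈ C)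
    (hweak : ∀ i, ∀ y : H,
      Tendsto (fun k => ⟪y, prodSeq T i (x i) (k - i)⟫) atTop (𝓝 ⟪y, xinf i⟫)) :
    ∃ xlim ∈ C, Tendsto xinf atTop (𝓝 xlim) ∧
      (∀ y : H, Tendsto (fun k => ⟪y, x k⟫) atTop (𝓝 ⟪y, xlim⟫)) ∧
      ∀ y : H, ∀ i k : ℕ, i ≤ k →
        |⟪y, x (k + 1) - xlim⟫| ≤
          |⟪y, prodSeq T i (x i) (k + 1 - i) - xinf i⟫| +
            2 * ‖y‖ * ∑' j, β (i + j) * ‖v (i + j)‖ := by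
  obtain ⟨B, hB⟩ := hv
  set f : ℕ → ℝ := fun j => β j * ‖v j‖ with hf_def
  have hf0 : ∀ j, 0 ≤ f j := fun j => mul_nonneg (hβ j).le (norm_nonneg _)
  have hfs : Summable f := by
    have hB0 : 0 ≤ B := le_trans (norm_nonneg _) (hB 0)
    refine Summable.of_nonneg_of_le hf0 (fun j => ?_) (hβsum.mul_right B)
    exact mul_le_mul_of_nonneg_left (hB j) (hβ j).le
  set ε : ℕ → ℝ := fun i => ∑' j, f (i + j) with hε_def
  have hsumi : ∀ i, Summable (fun j => f (i + j)) := fun i =>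
    hfs.comp_injective (add_right_injective i)
  have hε0le : ∀ i, 0 ≤ ε i := fun i => tsum_nonneg (fun j => hf0 _)
  have hεrec : ∀ i, ε i = f i + ε (i + 1) := by
    intro i
    have := Summable.tsum_eq_zero_add (hsumi i)
    simp only [add_zero] at this
    rw [hε_def]
    simp only
    rw [this]
    congr 1
    exact tsum_congr (fun j => by rw [show i + (j + 1) = (i + 1) + j by omega])
  have hεanti : Antitone ε := antitone_nat_of_succ_le (fun i => by
    rw [hεrec i]; linarith [hf0 i])
  have hεtend : Tendsto ε atTop (𝓝 0) := by
    have h := tendsto_sum_nat_add f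
    refine h.congr (fun i => tsum_congr (fun j => by rw [add_comm]))
  -- partial sums bounded by tails
  have hpart : ∀ i n, ∑ j ∈ Finset.range n, f (i + j) ≤ ε i := fun i n =>
    Summable.sum_le_tsum (Finset.range n) (fun j _ => hf0 _) (hsumi i)
  -- key perturbation estimate
  have hA : ∀ i n, ‖x (i + n) - prodSeq T i (x i) n‖ ≤ ∑ j ∈ Finset.range n, f (i + j) := by
    intro i n
    induction n with
    | zero => simp [prodSeq]
    | succ n ih =>
      calc ‖x (i + (n + 1)) - prodSeq T i (x i) (n + 1)‖
          = ‖T (i + n) (x (i + n) - β (i + n) • v (i + n)) - T (i + n) (prodSeq T i (x i) n)‖ := by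
            rw [show i + (n + 1) = (i + n) + 1 by ring, hx (i + n)]; rfl
        _ ≤ ‖(x (i + n) - β (i + n) • v (i + n)) - prodSeq T i (x i) n‖ := hT _ _ _
        _ = ‖(x (i + n) - prodSeq T i (x i) n) - β (i + n) • v (i + n)‖ := by
            rw [sub_right_comm]
        _ ≤ ‖x (i + n) - prodSeq T i (x i) n‖ + ‖β (i + n) • v (i + n)‖ := norm_sub_le _ _
        _ ≤ (∑ j ∈ Finset.range n, f (i + j)) + f (i + n) := by
            refine add_le_add ih ?_
            rw [norm_smul, Real.norm_eq_abs, abs_of_pos (hβ _)]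
        _ = ∑ j ∈ Finset.range (n + 1), f (i + j) := (Finset.sum_range_succ _ _).symm
  have hA' : ∀ i n, ‖x (i + n) - prodSeq T i (x i) n‖ ≤ ε i :=
    fun i n => (hA i n).trans (hpart i n)
  -- distance between successive weak limits
  have hdiff : ∀ i i', i ≤ i' → ‖xinf i' - xinf i‖ ≤ ε i := by
    intro i i' hii
    set w := prodSeq T i (x i) (i' - i) with hw_def
    have hw : ‖x i' - w‖ ≤ ε i := by
      have := hA' i (i' - i)
      rwa [show i + (i' - i) = i' by omega] at this
    set y := xinf i' - xinf i with hy_def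
    have hten : Tendsto (fun k => ⟪y, prodSeq T i' (x i') (k - i')⟫
        - ⟪y, prodSeq T i (x i) (k - i)⟫) atTop (𝓝 ⟪y, xinf i' - xinf i⟫) := by
      rw [inner_sub_right]
      exact (hweak i' y).sub (hweak i y)
    have hbound : ∀ᶠ k in atTop, (⟪y, prodSeq T i' (x i') (k - i')⟫
        - ⟪y, prodSeq T i (x i) (k - i)⟫) ≤ ‖y‖ * ε i := by
      filter_upwards [eventually_ge_atTop i'] with k hk
      have heq : prodSeq T i (x i) (k - i) = prodSeq T i' w (k - i') := by
        rw [show k - i = (i' - i) + (k - i') by omega, prodSeq_add,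
          show i + (i' - i) = i' by omega]
      rw [heq, ← inner_sub_right]
      calc ⟪y, prodSeq T i' (x i') (k - i') - prodSeq T i' w (k - i')⟫
          ≤ ‖y‖ * ‖prodSeq T i' (x i') (k - i') - prodSeq T i' w (k - i')‖ :=
            real_inner_le_norm _ _
        _ ≤ ‖y‖ * ‖x i' - w‖ :=
            mul_le_mul_of_nonneg_left (prodSeq_nonexp T hT i' _ _ _) (norm_nonneg _)
        _ ≤ ‖y‖ * ε i := mul_le_mul_of_nonneg_left hw (norm_nonneg _)
    have hsq : ⟪y, xinf i' - xinf i⟫ ≤ ‖y‖ * ε i := le_of_tendsto hten hbound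
    rw [← hy_def, real_inner_self_eq_norm_sq] at hsq
    rcases eq_or_lt_of_le (norm_nonneg y) with h0 | h0
    · rw [← h0]; exact hε0le i
    · nlinarith [hsq]
  -- Cauchy
  have hCauchy : CauchySeq xinf := by
    refine cauchySeq_of_le_tendsto_0 ε (fun n m N hn hm => ?_) hεtend
    rcases le_total n m with h | h
    · rw [dist_comm, dist_eq_norm]
      exact (hdiff n m h).trans (hεanti hn)
    · rw [dist_eq_norm]
      exact (hdiff m n h).trans (hεanti hm)
  obtain ⟨xlim, hlim⟩ := cauchySeq_tendsto_of_complete hCauchy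
  have hxlimC : xlim ∈ C := hCcl.mem_of_tendsto hlim (Eventually.of_forall hxinfC)
  have hxinflim : ∀ i, ‖xinf i - xlim‖ ≤ ε i := by
    intro i
    have h1 : Tendsto (fun i' => ‖xinf i' - xinf i‖) atTop (𝓝 ‖xlim - xinf i‖) :=
      ((hlim.sub_const (xinf i)).norm)
    rw [norm_sub_rev]
    refine le_of_tendsto h1 ?_
    filter_upwards [eventually_ge_atTop i] with i' hi' using hdiff i i' hi'
  -- main inequality
  have hmain : ∀ (y : H) (i k : ℕ), i ≤ k →
      |⟪y, x (k + 1) - xlim⟫| ≤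
        |⟪y, prodSeq T i (x i) (k + 1 - i) - xinf i⟫| + 2 * ‖y‖ * ε i := by
    intro y i k hik
    set P := prodSeq T i (x i) (k + 1 - i) with hP_def
    have hxP : ‖x (k + 1) - P‖ ≤ ε i := by
      have := hA' i (k + 1 - i)
      rwa [show i + (k + 1 - i) = k + 1 by omega] at this
    have hsplit : ⟪y, x (k + 1) - xlim⟫ =
        ⟪y, x (k + 1) - P⟫ + ⟪y, P - xinf i⟫ + ⟪y, xinf i - xlim⟫ := by
      rw [← inner_add_right, ← inner_add_right]
      congr 1
      abel
    rw [hsplit]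
    calc |⟪y, x (k + 1) - P⟫ + ⟪y, P - xinf i⟫ + ⟪y, xinf i - xlim⟫|
        ≤ |⟪y, x (k + 1) - P⟫| + |⟪y, P - xinf i⟫| + |⟪y, xinf i - xlim⟫| :=
          (abs_add_le _ _).trans (add_le_add_left (abs_add_le _ _) _)
      _ ≤ ‖y‖ * ε i + |⟪y, P - xinf i⟫| + ‖y‖ * ε i := by
          refine add_le_add (add_le_add ?_ le_rfl) ?_
          · exact (abs_real_inner_le_norm _ _).trans
              (mul_le_mul_of_nonneg_left hxP (norm_nonneg _))
          · exact (abs_real_inner_le_norm _ _).trans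
              (mul_le_mul_of_nonneg_left (hxinflim i) (norm_nonneg _))
      _ = |⟪y, P - xinf i⟫| + 2 * ‖y‖ * ε i := by ring
  -- weak convergence of x
  have hweakx : ∀ y : H, Tendsto (fun k => ⟪y, x k⟫) atTop (𝓝 ⟪y, xlim⟫) := by
    intro y
    have key : Tendsto (fun k => ⟪y, x k - xlim⟫) atTop (𝓝 0) := by
      rw [Metric.tendsto_atTop]
      intro δ hδ
      have h2y : Tendsto (fun i => 2 * ‖y‖ * ε i) atTop (𝓝 0) := by
        have := hεtend.const_mul (2 * ‖y‖)
        simpa using this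
      obtain ⟨i, hi⟩ := (h2y.eventually (eventually_lt_nhds (show (0:ℝ) < δ/2 by linarith)
        )).exists
      have hg : Tendsto (fun k => |⟪y, prodSeq T i (x i) (k - i) - xinf i⟫|) atTop (𝓝 0) := by
        have h1 : Tendsto (fun k => ⟪y, prodSeq T i (x i) (k - i) - xinf i⟫) atTop (𝓝 0) := by
          have := (hweak i y).sub_const ⟪y, xinf i⟫
          simp only [sub_self] at this
          refine this.congr (fun k => ?_)
          rw [inner_sub_right]
        simpa using h1.abs
      rw [Metric.tendsto_atTop] at hg
      obtain ⟨N, hN⟩ := hg (δ/2) (by linarith)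
      refine ⟨max N (i + 1), fun k hk => ?_⟩
      have hkN : N ≤ k := le_trans (le_max_left _ _) hk
      have hki : i + 1 ≤ k := le_trans (le_max_right _ _) hk
      have hm := hmain y i (k - 1) (by omega)
      rw [show k - 1 + 1 = k by omega] at hm
      have hgk := hN k hkN
      rw [Real.dist_eq, sub_zero, abs_abs] at hgk
      rw [Real.dist_eq, sub_zero]
      calc |⟪y, x k - xlim⟫| ≤ |⟪y, prodSeq T i (x i) (k - i) - xinf i⟫| + 2 * ‖y‖ * ε i := hm
        _ < δ/2 + δ/2 := add_lt_add hgk hi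
        _ = δ := by ring
    have := key.add_const ⟪y, xlim⟫
    simp only [zero_add] at this
    refine this.congr (fun k => ?_)
    rw [inner_sub_right]; ring
  exact ⟨xlim, hxlimC, hlim, hweakx, fun y i k hik => hmain y i k hik⟩
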